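/- Fix d_P, d_Q ≥ 1, a₀ > 0, ε > 0, c ≥ 0, and φ ∈ ℝ with 1 − ε ≥ d_P·a₀ and c ≤ a*·ε, where a* := 1 − ε − (d_P − 1)a₀. Let p_1, …, p_{d_P} be the standard basis of ℂ^{d_P} and q_1 the first standard basis vector of ℂ^{d_Q}, and define the matrix ρ on ℂ^{d_P+d_Q} whose only nonzero entries are: ⟨p_1, ρ p_1⟩ = a*, ⟨q_1, ρ q_1⟩ = ε, ⟨p_1, ρ q_1⟩ = √c·e^{iφ}, ⟨q_1, ρ p_1⟩ = √c·e^{−iφ}, and ⟨p_k, ρ p_k⟩ = a₀ for k = 2, …, d_P. Then ρ is a density matrix with A ≥ a₀I, Tr(C) = ε, ‖B‖_F² = c, and D(ρ‖Πρ) = Φ(a*, ε, c). -/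

import Mathlib

open Matrix MeasureTheory
open scoped ComplexOrder

noncomputable section

/-- Matrix logarithm of a Hermitian matrix via functional calculus on its eigenvalues,
with the convention `log 0 = 0` (since `Real.log 0 = 0`); junk value `0` on
non-Hermitian matrices. -/
def mlog {m : Type*} [Fintype m] [DecidableEq m] (M : Matrix m m ℂ) : Matrix m m ℂ :=
  open scoped Classical in
  if h : M.IsHermitian then
    (h.eigenvectorUnitary : Matrix m m ℂ) *
      Matrix.diagonal (fun i => (Real.log (h.eigenvalues i) : ℂ)) *
      (h.eigenvectorUnitary : Matrix m m ℂ)ᴴ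
  else 0

/-- Umegaki quantum relative entropy `D(ρ‖σ) = Tr[ρ (log ρ − log σ)]`. -/
def relEnt {m : Type*} [Fintype m] [DecidableEq m] (ρ σ : Matrix m m ℂ) : ℝ :=
  ((ρ * (mlog ρ - mlog σ)).trace).re

/-- The two-level entropy functional
`Φ(a,ε,x) = λ₊ log λ₊ + λ₋ log λ₋ − a log a − ε log ε`, where
`λ± = (a + ε ± √((a−ε)² + 4x))/2` (with `0 log 0 = 0` via `Real.log 0 = 0`). -/
def Phi (a ε x : ℝ) : ℝ :=
  ((a + ε + Real.sqrt ((a - ε) ^ 2 + 4 * x)) / 2) *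
      Real.log ((a + ε + Real.sqrt ((a - ε) ^ 2 + 4 * x)) / 2) +
    ((a + ε - Real.sqrt ((a - ε) ^ 2 + 4 * x)) / 2) *
      Real.log ((a + ε - Real.sqrt ((a - ε) ^ 2 + 4 * x)) / 2) -
    a * Real.log a - ε * Real.log ε

/-! ### Auxiliary lemmas -/

section Aux

set_option linter.unusedSectionVars false

variable {n : Type*} [Fintype n] [DecidableEq n]

lemma mlog_conj (V M : Matrix n n ℂ) (d : n → ℝ) (hV : Vᴴ * V = 1)
    (hM : M = V * Matrix.diagonal (fun i => (d i : ℂ)) * Vᴴ) :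
    mlog M = V * Matrix.diagonal (fun i => (Real.log (d i) : ℂ)) * Vᴴ := by
  have hV2 : V * Vᴴ = 1 := mul_eq_one_comm.mp hV
  have hdh : (Matrix.diagonal (fun i => (d i : ℂ))).IsHermitian :=
    isHermitian_diagonal_iff.mpr fun i => Complex.conj_ofReal _
  have hH : M.IsHermitian := by
    rw [hM]; exact isHermitian_mul_mul_conjTranspose V hdh
  set U := (hH.eigenvectorUnitary : Matrix n n ℂ) with hUdef
  have hU1 : Uᴴ * U = 1 := by
    rw [← Matrix.star_eq_conjTranspose]
    exact Matrix.UnitaryGroup.star_mul_self _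
  have hU2 : U * Uᴴ = 1 := mul_eq_one_comm.mp hU1
  have hspec : M = U * Matrix.diagonal (fun i => (hH.eigenvalues i : ℂ)) * Uᴴ := by
    have := hH.spectral_theorem
    rw [Unitary.conjStarAlgAut_apply, Matrix.star_eq_conjTranspose] at this
    exact this
  set μ := hH.eigenvalues with hμdef
  have key : Matrix.diagonal (fun i => (μ i : ℂ)) * (Uᴴ * V)
      = (Uᴴ * V) * Matrix.diagonal (fun i => (d i : ℂ)) := by
    have h3 : Uᴴ * (U * Matrix.diagonal (fun i => (μ i : ℂ)) * Uᴴ) * V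
        = Uᴴ * (V * Matrix.diagonal (fun i => (d i : ℂ)) * Vᴴ) * V := by
      rw [← hspec, ← hM]
    calc Matrix.diagonal (fun i => (μ i : ℂ)) * (Uᴴ * V)
        = (Uᴴ * U) * Matrix.diagonal (fun i => (μ i : ℂ)) * (Uᴴ * V) := by
          rw [hU1, one_mul]
      _ = Uᴴ * (U * Matrix.diagonal (fun i => (μ i : ℂ)) * Uᴴ) * V := by
          simp only [mul_assoc]
      _ = Uᴴ * (V * Matrix.diagonal (fun i => (d i : ℂ)) * Vᴴ) * V := h3
      _ = (Uᴴ * V) * Matrix.diagonal (fun i => (d i : ℂ)) * (Vᴴ * V) := by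
          simp only [mul_assoc]
      _ = (Uᴴ * V) * Matrix.diagonal (fun i => (d i : ℂ)) := by
          rw [hV, mul_one]
  have keylog : Matrix.diagonal (fun i => (Real.log (μ i) : ℂ)) * (Uᴴ * V)
      = (Uᴴ * V) * Matrix.diagonal (fun j => (Real.log (d j) : ℂ)) := by
    ext i j
    simp only [Matrix.diagonal_mul, Matrix.mul_diagonal]
    by_cases h : (Uᴴ * V) i j = 0
    · simp [h]
    · have h2 : (μ i : ℂ) * (Uᴴ * V) i j = (Uᴴ * V) i j * (d j : ℂ) := by
        have := congrArg (fun X : Matrix n n ℂ => X i j) key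
        simpa [Matrix.diagonal_mul, Matrix.mul_diagonal] using this
      rw [mul_comm] at h2
      have h3 : (μ i : ℂ) = (d j : ℂ) := mul_left_cancel₀ h h2
      have h4 : μ i = d j := by exact_mod_cast h3
      rw [h4, mul_comm]
  have hml : mlog M = U * Matrix.diagonal (fun i => (Real.log (μ i) : ℂ)) * Uᴴ := by
    unfold mlog
    rw [dif_pos hH]
  rw [hml]
  calc U * Matrix.diagonal (fun i => (Real.log (μ i) : ℂ)) * Uᴴ
      = U * Matrix.diagonal (fun i => (Real.log (μ i) : ℂ)) * (Uᴴ * (V * Vᴴ)) := by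
        rw [hV2, mul_one]
    _ = U * (Matrix.diagonal (fun i => (Real.log (μ i) : ℂ)) * (Uᴴ * V)) * Vᴴ := by
        simp only [mul_assoc]
    _ = U * ((Uᴴ * V) * Matrix.diagonal (fun j => (Real.log (d j) : ℂ))) * Vᴴ := by
        rw [keylog]
    _ = (U * Uᴴ) * (V * (Matrix.diagonal (fun j => (Real.log (d j) : ℂ)) * Vᴴ)) := by
        simp only [mul_assoc]
    _ = V * Matrix.diagonal (fun j => (Real.log (d j) : ℂ)) * Vᴴ := by
        rw [hU2, one_mul, mul_assoc]

lemma trace_mul_mlog (V M : Matrix n n ℂ) (d : n → ℝ) (hV : Vᴴ * V = 1)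
    (hM : M = V * Matrix.diagonal (fun i => (d i : ℂ)) * Vᴴ) :
    (M * mlog M).trace = ((∑ i, d i * Real.log (d i) : ℝ) : ℂ) := by
  rw [mlog_conj V M d hV hM]
  nth_rewrite 1 [hM]
  have h1 : (V * Matrix.diagonal (fun i => (d i : ℂ)) * Vᴴ) *
      (V * Matrix.diagonal (fun i => (Real.log (d i) : ℂ)) * Vᴴ)
      = V * (Matrix.diagonal (fun i => (d i : ℂ)) * (Vᴴ * V) *
          Matrix.diagonal (fun i => (Real.log (d i) : ℂ))) * Vᴴ := by
    simp only [mul_assoc]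
  rw [h1, hV, mul_one, diagonal_mul_diagonal, trace_mul_cycle, hV, one_mul,
    trace_diagonal]
  push_cast
  rfl

lemma trace_conj_eq (V M : Matrix n n ℂ) (hV : Vᴴ * V = 1) :
    (V * M * Vᴴ).trace = M.trace := by
  rw [trace_mul_cycle, hV, one_mul]

lemma psd_of_conj (V M : Matrix n n ℂ) (d : n → ℝ)
    (hM : M = V * Matrix.diagonal (fun i => (d i : ℂ)) * Vᴴ) (hd : ∀ i, 0 ≤ d i) :
    M.PosSemidef := by
  rw [hM]
  exact (posSemidef_diagonal_iff.mpr fun i => by exact_mod_cast hd i).mul_mul_conjTranspose_same V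

end Aux

section Single

set_option linter.unusedSectionVars false

/-- A matrix with a single (possibly) nonzero entry. -/
def msingle {m p : Type*} [DecidableEq m] [DecidableEq p] (i0 : m) (j0 : p) (v : ℂ) :
    Matrix m p ℂ :=
  Matrix.of fun i j => if i = i0 ∧ j = j0 then v else 0

variable {m p q : Type*} [Fintype m] [Fintype p] [Fintype q]
  [DecidableEq m] [DecidableEq p] [DecidableEq q]

lemma msingle_apply (i0 : m) (j0 : p) (v : ℂ) (i j) :
    msingle i0 j0 v i j = if i = i0 ∧ j = j0 then v else 0 := rfl

lemma msingle_conjTranspose (i0 : m) (j0 : p) (v : ℂ) :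
    (msingle i0 j0 v)ᴴ = msingle j0 i0 ((starRingEnd ℂ) v) := by
  ext i j
  simp only [conjTranspose_apply, msingle_apply]
  split_ifs with h1 h2 h2 <;> simp_all [and_comm]

lemma msingle_zero (i0 : m) (j0 : p) : msingle i0 j0 (0 : ℂ) = 0 := by
  ext i j
  simp [msingle_apply]

lemma msingle_add (i0 : m) (j0 : p) (v w : ℂ) :
    msingle i0 j0 v + msingle i0 j0 w = msingle i0 j0 (v + w) := by
  ext i j
  simp only [Matrix.add_apply, msingle_apply]
  split_ifs <;> simp

lemma diagonal_mul_msingle (f : m → ℂ) (i0 : m) (j0 : p) (v : ℂ) :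
    Matrix.diagonal f * msingle i0 j0 v = msingle i0 j0 (f i0 * v) := by
  ext i j
  rw [Matrix.diagonal_mul]
  simp only [msingle_apply]
  split_ifs with h
  · rw [h.1]
  · simp

lemma msingle_mul_diagonal (g : p → ℂ) (i0 : m) (j0 : p) (v : ℂ) :
    msingle i0 j0 v * Matrix.diagonal g = msingle i0 j0 (v * g j0) := by
  ext i j
  rw [Matrix.mul_diagonal]
  simp only [msingle_apply]
  split_ifs with h
  · rw [h.2]
  · simp

lemma msingle_mul_msingle (i0 : m) (j0 : p) (k0 : q) (v w : ℂ) :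
    msingle i0 j0 v * msingle j0 k0 w = msingle i0 k0 (v * w) := by
  ext i k
  rw [Matrix.mul_apply, Finset.sum_eq_single j0]
  · simp only [msingle_apply]
    split_ifs with h1 h2 h2 <;> simp_all
  · intro b _ hb
    simp [msingle_apply, hb]
  · simp

lemma trace_msingle (i0 : m) (v : ℂ) : (msingle i0 i0 v).trace = v := by
  simp only [Matrix.trace, Matrix.diag, msingle_apply, and_self]
  rw [Finset.sum_ite_eq' Finset.univ i0 fun _ => v]
  simp

lemma diagonal_add_msingle (h : m → ℂ) (i0 : m) (w : ℂ) :
    Matrix.diagonal h + msingle i0 i0 w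
      = Matrix.diagonal (fun i => if i = i0 then h i0 + w else h i) := by
  ext i j
  simp only [Matrix.add_apply, Matrix.diagonal_apply, msingle_apply]
  by_cases hij : i = j
  · subst hij
    by_cases hi : i = i0 <;> simp [hi]
  · have : ¬(i = i0 ∧ j = i0) := by
      rintro ⟨h1, h2⟩; exact hij (h1.trans h2.symm)
    simp [hij, this]

lemma sum_apply_ite_card (i0 : m) (g : ℝ → ℝ) (x y : ℝ) :
    ∑ i, g (if i = i0 then x else y) = g x + ((Fintype.card m - 1 : ℕ) : ℝ) * g y := by
  have h : ∀ i : m, g (if i = i0 then x else y) = if i = i0 then g x else g y :=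
    fun i => by split_ifs <;> rfl
  simp_rw [h]
  rw [← Finset.add_sum_erase _ _ (Finset.mem_univ i0), if_pos rfl]
  congr 1
  rw [Finset.sum_congr rfl (fun i hi => if_neg (Finset.ne_of_mem_erase hi)),
    Finset.sum_const, Finset.card_erase_of_mem (Finset.mem_univ i0), Finset.card_univ,
    nsmul_eq_mul]

lemma aux_RA (a t u : ℝ) (h1 : -(t*u) + t^2 ≠ 0) (h2 : -(t*u) + u^2 ≠ 0) :
    (a+t)*(-(t*u)*(-(t*u)+t^2)⁻¹) + (a+u)*(-(t*u)*(-(t*u)+u^2)⁻¹) = a := by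
  have ht : t ≠ 0 := by rintro rfl; simp at h1
  have hu : u ≠ 0 := by rintro rfl; simp at h2
  have htu : t - u ≠ 0 := fun h => h1 (by have : t = u := by linarith
                                          subst this; ring)
  rw [show -(t*u) + t^2 = t*(t-u) by ring, show -(t*u) + u^2 = -(u*(t-u)) by ring]
  field_simp
  ring

lemma aux_RB (a t u : ℝ) (h1 : -(t*u) + t^2 ≠ 0) (h2 : -(t*u) + u^2 ≠ 0) :
    (a+t)*(t*(-(t*u)+t^2)⁻¹) + (a+u)*(u*(-(t*u)+u^2)⁻¹) = 1 := by
  have ht : t ≠ 0 := by rintro rfl; simp at h1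
  have hu : u ≠ 0 := by rintro rfl; simp at h2
  have htu : t - u ≠ 0 := fun h => h1 (by have : t = u := by linarith
                                          subst this; ring)
  rw [show -(t*u) + t^2 = t*(t-u) by ring, show -(t*u) + u^2 = -(u*(t-u)) by ring]
  field_simp
  ring

lemma aux_RC (a t u : ℝ) (h1 : -(t*u) + t^2 ≠ 0) (h2 : -(t*u) + u^2 ≠ 0) :
    (a+t)*(t^2*(-(t*u)+t^2)⁻¹) + (a+u)*(u^2*(-(t*u)+u^2)⁻¹) = a+t+u := by
  have ht : t ≠ 0 := by rintro rfl; simp at h1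
  have hu : u ≠ 0 := by rintro rfl; simp at h2
  have htu : t - u ≠ 0 := fun h => h1 (by have : t = u := by linarith
                                          subst this; ring)
  rw [show -(t*u) + t^2 = t*(t-u) by ring, show -(t*u) + u^2 = -(u*(t-u)) by ring]
  field_simp
  ring

end Single

set_option maxHeartbeats 2000000 in
/-- The explicit two-level optimizer: the state with `⟨p₁,ρp₁⟩ = a*`,
`⟨q₁,ρq₁⟩ = ε`, `⟨p₁,ρq₁⟩ = √c e^{iφ}`, `⟨q₁,ρp₁⟩ = √c e^{−iφ}`,
`⟨p_k,ρp_k⟩ = a₀` (k ≥ 2) and all other entries zero is a density matrix with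
`A ≥ a₀ I`, `Tr C = ε`, `‖B‖_F² = c`, and `D(ρ‖Πρ) = Φ(a*, ε, c)`. -/
theorem explicit_optimizer {dP dQ : ℕ} (hdP : 1 ≤ dP) (hdQ : 1 ≤ dQ)
    (a₀ ε c φ : ℝ) (ha₀ : 0 < a₀) (hε : 0 < ε) (hc : 0 ≤ c)
    (hcap : 1 - ε ≥ (dP : ℝ) * a₀)
    (hcpos : c ≤ (1 - ε - ((dP : ℝ) - 1) * a₀) * ε)
    (A : Matrix (Fin dP) (Fin dP) ℂ)
    (hA : A = Matrix.diagonal (fun i : Fin dP =>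
      if i = (⟨0, hdP⟩ : Fin dP)
        then ((1 - ε - ((dP : ℝ) - 1) * a₀ : ℝ) : ℂ) else ((a₀ : ℝ) : ℂ)))
    (C : Matrix (Fin dQ) (Fin dQ) ℂ)
    (hC : C = Matrix.diagonal (fun j : Fin dQ =>
      if j = (⟨0, hdQ⟩ : Fin dQ) then ((ε : ℝ) : ℂ) else 0))
    (B : Matrix (Fin dP) (Fin dQ) ℂ)
    (hB : B = Matrix.of fun (i : Fin dP) (j : Fin dQ) =>
      if i = (⟨0, hdP⟩ : Fin dP) ∧ j = (⟨0, hdQ⟩ : Fin dQ)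
        then ((Real.sqrt c : ℝ) : ℂ) * Complex.exp ((φ : ℂ) * Complex.I) else 0)
    (ρ : Matrix (Fin dP ⊕ Fin dQ) (Fin dP ⊕ Fin dQ) ℂ)
    (hρ : ρ = fromBlocks A B Bᴴ C) :
    ρ.PosSemidef ∧ ρ.trace = 1 ∧
      (A - a₀ • 1).PosSemidef ∧ C.trace = (ε : ℂ) ∧ (Bᴴ * B).trace = (c : ℂ) ∧
      relEnt ρ (fromBlocks A 0 0 C) = Phi (1 - ε - ((dP : ℝ) - 1) * a₀) ε c := by
  classical
  have hdP1 : (1 : ℝ) ≤ (dP : ℝ) := by exact_mod_cast hdP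
  set i0 : Fin dP := ⟨0, hdP⟩ with hi0
  set j0 : Fin dQ := ⟨0, hdQ⟩ with hj0
  set a : ℝ := 1 - ε - ((dP : ℝ) - 1) * a₀ with ha_def
  have hprod : ((dP : ℝ) - 1) * a₀ = (dP : ℝ) * a₀ - a₀ := by ring
  have haa₀ : a₀ ≤ a := by rw [ha_def, hprod]; linarith
  have ha : 0 < a := lt_of_lt_of_le ha₀ haa₀
  have hcae : c ≤ a * ε := hcpos
  set s : ℝ := Real.sqrt ((a - ε) ^ 2 + 4 * c) with hs_def
  have hs2 : s ^ 2 = (a - ε) ^ 2 + 4 * c := Real.sq_sqrt (by positivity)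
  have hs0 : 0 ≤ s := Real.sqrt_nonneg _
  set lp : ℝ := (a + ε + s) / 2 with hlp_def
  set lm : ℝ := (a + ε - s) / 2 with hlm_def
  have hlm0 : 0 ≤ lm := by
    have h1 : s ≤ a + ε := by nlinarith
    rw [hlm_def]; linarith
  have hlp0 : 0 ≤ lp := by rw [hlp_def]; linarith
  have hlplm : lp + lm = a + ε := by rw [hlp_def, hlm_def]; ring
  set Af : Fin dP → ℝ := fun i => if i = i0 then a else a₀ with hAf
  set Cf : Fin dQ → ℝ := fun j => if j = j0 then ε else 0 with hCf
  have hA' : A = Matrix.diagonal (fun i => ((Af i : ℝ) : ℂ)) := by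
    rw [hA]
    have hfe : (fun i => if i = i0 then ((a : ℝ) : ℂ) else ((a₀ : ℝ) : ℂ))
        = fun i => ((Af i : ℝ) : ℂ) := by
      funext i; rw [hAf]; dsimp only; split_ifs <;> simp
    rw [hfe]
  have hC' : C = Matrix.diagonal (fun j => ((Cf j : ℝ) : ℂ)) := by
    rw [hC]
    have hfe : (fun j => if j = j0 then ((ε : ℝ) : ℂ) else (0 : ℂ))
        = fun j => ((Cf j : ℝ) : ℂ) := by
      funext j; rw [hCf]; dsimp only; split_ifs <;> simp
    rw [hfe]
  set z : ℂ := ((Real.sqrt c : ℝ) : ℂ) * Complex.exp ((φ : ℂ) * Complex.I) with hz_def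
  have hB' : B = msingle i0 j0 z := by rw [hB]; rfl
  have hzz : (starRingEnd ℂ) z * z = (c : ℂ) := by
    rw [hz_def, _root_.map_mul, Complex.conj_ofReal, ← Complex.exp_conj]
    have hcj : (starRingEnd ℂ) ((φ : ℂ) * Complex.I) = -((φ : ℂ) * Complex.I) := by
      rw [_root_.map_mul, Complex.conj_ofReal, Complex.conj_I]; ring
    rw [hcj, mul_mul_mul_comm, ← Complex.exp_add, neg_add_cancel, Complex.exp_zero, mul_one,
      ← Complex.ofReal_mul, Real.mul_self_sqrt hc]
  have hcardP : ((Fintype.card (Fin dP) - 1 : ℕ) : ℝ) = (dP : ℝ) - 1 := by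
    rw [Fintype.card_fin, Nat.cast_sub hdP, Nat.cast_one]
  have hPi : fromBlocks A 0 0 C
      = Matrix.diagonal (fun x => ((Sum.elim Af Cf x : ℝ) : ℂ)) := by
    rw [hA', hC']
    rw [show (Matrix.diagonal fun x => ((Sum.elim Af Cf x : ℝ) : ℂ))
        = Matrix.diagonal (Sum.elim (fun i => ((Af i : ℝ) : ℂ)) (fun j => ((Cf j : ℝ) : ℂ)))
      from by congr 1; funext x; cases x <;> rfl]
    exact Matrix.fromBlocks_diagonal _ _
  have hPi1 : fromBlocks A 0 0 C = (1 : Matrix (Fin dP ⊕ Fin dQ) (Fin dP ⊕ Fin dQ) ℂ) *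
      Matrix.diagonal (fun x => ((Sum.elim Af Cf x : ℝ) : ℂ)) *
      (1 : Matrix (Fin dP ⊕ Fin dQ) (Fin dP ⊕ Fin dQ) ℂ)ᴴ := by
    rw [conjTranspose_one, mul_one, one_mul]; exact hPi
  have hmlogPi : mlog (fromBlocks A 0 0 C)
      = Matrix.diagonal (fun x => ((Real.log (Sum.elim Af Cf x) : ℝ) : ℂ)) := by
    rw [mlog_conj 1 _ (Sum.elim Af Cf) (by simp) hPi1, conjTranspose_one, mul_one, one_mul]
  -- the main decomposition
  obtain ⟨V, dv, hVu, hdec, hdv0, hdvsum, hdvlog⟩ :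
      ∃ (V : Matrix (Fin dP ⊕ Fin dQ) (Fin dP ⊕ Fin dQ) ℂ) (dv : Fin dP ⊕ Fin dQ → ℝ),
        Vᴴ * V = 1 ∧ ρ = V * Matrix.diagonal (fun x => ((dv x : ℝ) : ℂ)) * Vᴴ ∧
        (∀ x, 0 ≤ dv x) ∧ (∑ x, dv x) = 1 ∧
        (∑ x, dv x * Real.log (dv x))
          = lp * Real.log lp + lm * Real.log lm
            + ((dP : ℝ) - 1) * (a₀ * Real.log a₀) := by
    rcases eq_or_lt_of_le hc with hc0 | hcgt
    · -- c = 0 : ρ is already diagonal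
      refine ⟨1, Sum.elim Af Cf, by simp, ?_, ?_, ?_, ?_⟩
      · rw [conjTranspose_one, mul_one, one_mul, hρ, ← hPi]
        have hz0 : z = 0 := by rw [hz_def, ← hc0]; simp
        rw [hB', hz0, msingle_zero, conjTranspose_zero]
      · intro x
        cases x with
        | inl i =>
          simp only [Sum.elim_inl, hAf]; split_ifs
          · exact ha.le
          · exact ha₀.le
        | inr j =>
          simp only [Sum.elim_inr, hCf]; split_ifs
          · exact hε.le
          · exact le_refl 0
      · rw [Fintype.sum_sum_type]
        simp only [Sum.elim_inl, Sum.elim_inr]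
        have e1 : ∑ i, Af i = a + ((Fintype.card (Fin dP) - 1 : ℕ) : ℝ) * a₀ := by
          rw [hAf]; exact sum_apply_ite_card i0 (fun w => w) a a₀
        have e2 : ∑ j, Cf j = ε + ((Fintype.card (Fin dQ) - 1 : ℕ) : ℝ) * 0 := by
          rw [hCf]; exact sum_apply_ite_card j0 (fun w => w) ε 0
        rw [e1, e2, hcardP, ha_def]
        ring
      · rw [Fintype.sum_sum_type]
        simp only [Sum.elim_inl, Sum.elim_inr]
        have e1 : ∑ i, Af i * Real.log (Af i)
            = a * Real.log a + ((Fintype.card (Fin dP) - 1 : ℕ) : ℝ) * (a₀ * Real.log a₀) := by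
          rw [hAf]; exact sum_apply_ite_card i0 (fun w => w * Real.log w) a a₀
        have e2 : ∑ j, Cf j * Real.log (Cf j)
            = ε * Real.log ε + ((Fintype.card (Fin dQ) - 1 : ℕ) : ℝ) * (0 * Real.log 0) := by
          rw [hCf]; exact sum_apply_ite_card j0 (fun w => w * Real.log w) ε 0
        rw [e1, e2, hcardP]
        have hsabs : s = |a - ε| := by
          rw [hs_def, ← hc0, show (a - ε) ^ 2 + 4 * 0 = (a - ε) ^ 2 by ring,
            Real.sqrt_sq_eq_abs]
        rcases le_total ε a with hle | hle
        · have h1 : lp = a := by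
            rw [hlp_def, hsabs, abs_of_nonneg (by linarith)]; ring
          have h2 : lm = ε := by
            rw [hlm_def, hsabs, abs_of_nonneg (by linarith)]; ring
          rw [h1, h2]; ring
        · have h1 : lp = ε := by
            rw [hlp_def, hsabs, abs_of_nonpos (by linarith)]; ring
          have h2 : lm = a := by
            rw [hlm_def, hsabs, abs_of_nonpos (by linarith)]; ring
          rw [h1, h2]; ring
    · -- 0 < c : genuine two-level mixing
      set t : ℝ := lp - a with ht_def
      set u : ℝ := lm - a with hu_def
      have hlpt : lp = a + t := by rw [ht_def]; ring
      have hlmu : lm = a + u := by rw [hu_def]; ring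
      have htu : t * u = -c := by
        have h1 : t * u = ((ε - a) ^ 2 - s ^ 2) / 4 := by
          rw [ht_def, hu_def, hlp_def, hlm_def]; ring
        rw [h1, hs2]; ring
      have hcneg : c = -(t * u) := by linarith
      have hsum_tu : a + t + u = ε := by
        rw [ht_def, hu_def, hlp_def, hlm_def]; ring
      have hnp2 : 0 < c + t ^ 2 := add_pos_of_pos_of_nonneg hcgt (sq_nonneg t)
      have hnm2 : 0 < c + u ^ 2 := add_pos_of_pos_of_nonneg hcgt (sq_nonneg u)
      set np : ℝ := Real.sqrt (c + t ^ 2) with hnp_def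
      set nm : ℝ := Real.sqrt (c + u ^ 2) with hnm_def
      have hnp : np * np = c + t ^ 2 := Real.mul_self_sqrt hnp2.le
      have hnm : nm * nm = c + u ^ 2 := Real.mul_self_sqrt hnm2.le
      have hnp0 : 0 < np := Real.sqrt_pos.mpr hnp2
      have hnm0 : 0 < nm := Real.sqrt_pos.mpr hnm2
      set rp : ℝ := np⁻¹ with hrp_def
      set rm : ℝ := nm⁻¹ with hrm_def
      have hrp' : rp * rp = (c + t ^ 2)⁻¹ := by
        rw [hrp_def, ← mul_inv, hnp]
      have hrm' : rm * rm = (c + u ^ 2)⁻¹ := by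
        rw [hrm_def, ← mul_inv, hnm]
      have d1 : -(t * u) + t ^ 2 ≠ 0 := by rw [← hcneg]; exact hnp2.ne'
      have d2 : -(t * u) + u ^ 2 ≠ 0 := by rw [← hcneg]; exact hnm2.ne'
      -- real identities
      have hrpm : rp * rp * (c + t ^ 2) = 1 := by
        rw [hrp']; exact inv_mul_cancel₀ hnp2.ne'
      have hrmm : rm * rm * (c + u ^ 2) = 1 := by
        rw [hrm']; exact inv_mul_cancel₀ hnm2.ne'
      have RP : c * (rp * rp) + (t * rp) * (t * rp) = 1 := by
        linear_combination hrpm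
      have RQ : c * (rm * rm) + (u * rm) * (u * rm) = 1 := by
        linear_combination hrmm
      have RZ : c + t * u = 0 := by linarith
      have RA : lp * (c * (rp * rp)) + lm * (c * (rm * rm)) = a := by
        have h1 : lp * (c * (rp * rp)) = (a+t)*(-(t*u)*(-(t*u)+t^2)⁻¹) := by
          rw [hlpt, hrp', hcneg]
        have h2 : lm * (c * (rm * rm)) = (a+u)*(-(t*u)*(-(t*u)+u^2)⁻¹) := by
          rw [hlmu, hrm', hcneg]
        rw [h1, h2]; exact aux_RA a t u d1 d2
      have RB : lp * (t * (rp * rp)) + lm * (u * (rm * rm)) = 1 := by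
        have h1 : lp * (t * (rp * rp)) = (a+t)*(t*(-(t*u)+t^2)⁻¹) := by
          rw [hlpt, hrp', hcneg]
        have h2 : lm * (u * (rm * rm)) = (a+u)*(u*(-(t*u)+u^2)⁻¹) := by
          rw [hlmu, hrm', hcneg]
        rw [h1, h2]; exact aux_RB a t u d1 d2
      have RC : lp * (t ^ 2 * (rp * rp)) + lm * (u ^ 2 * (rm * rm)) = ε := by
        have h1 : lp * (t ^ 2 * (rp * rp)) = (a+t)*(t^2*(-(t*u)+t^2)⁻¹) := by
          rw [hlpt, hrp', hcneg]
        have h2 : lm * (u ^ 2 * (rm * rm)) = (a+u)*(u^2*(-(t*u)+u^2)⁻¹) := by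
          rw [hlmu, hrm', hcneg]
        rw [h1, h2, ← hsum_tu]; exact aux_RC a t u d1 d2
      -- complex scalars
      set α : ℂ := z * ((rp : ℝ) : ℂ) with hα_def
      set β : ℂ := z * ((rm : ℝ) : ℂ) with hβ_def
      set γ : ℂ := ((t * rp : ℝ) : ℂ) with hγ_def
      set δ : ℂ := ((u * rm : ℝ) : ℂ) with hδ_def
      have hcα : (starRingEnd ℂ) α = (starRingEnd ℂ) z * ((rp : ℝ) : ℂ) := by
        rw [hα_def, _root_.map_mul, Complex.conj_ofReal]
      have hcβ : (starRingEnd ℂ) β = (starRingEnd ℂ) z * ((rm : ℝ) : ℂ) := by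
        rw [hβ_def, _root_.map_mul, Complex.conj_ofReal]
      have hcγ : (starRingEnd ℂ) γ = γ := by rw [hγ_def]; exact Complex.conj_ofReal _
      have hcδ : (starRingEnd ℂ) δ = δ := by rw [hδ_def]; exact Complex.conj_ofReal _
      have s1 : (starRingEnd ℂ) α * α + (starRingEnd ℂ) γ * γ = 1 := by
        have e : (starRingEnd ℂ) α * α + (starRingEnd ℂ) γ * γ
            = ((starRingEnd ℂ) z * z) * (((rp * rp : ℝ)) : ℂ)
              + (((t * rp) * (t * rp) : ℝ) : ℂ) := by
          simp only [hcα, hcβ, hcγ, hcδ, hα_def, hβ_def, hγ_def, hδ_def, map_mul, Complex.conj_ofReal]; push_cast; ring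
        rw [e, hzz, ← Complex.ofReal_mul, ← Complex.ofReal_add]
        norm_cast
      have s2 : (starRingEnd ℂ) α * β + (starRingEnd ℂ) γ * δ = 0 := by
        have e : (starRingEnd ℂ) α * β + (starRingEnd ℂ) γ * δ
            = ((starRingEnd ℂ) z * z) * (((rp * rm : ℝ)) : ℂ)
              + (((t * rp) * (u * rm) : ℝ) : ℂ) := by
          simp only [hcα, hcβ, hcγ, hcδ, hα_def, hβ_def, hγ_def, hδ_def, map_mul, Complex.conj_ofReal]; push_cast; ring
        rw [e, hzz, ← Complex.ofReal_mul, ← Complex.ofReal_add]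
        norm_cast
        linear_combination (rp * rm) * RZ
      have s3 : (starRingEnd ℂ) β * α + (starRingEnd ℂ) δ * γ = 0 := by
        have e : (starRingEnd ℂ) β * α + (starRingEnd ℂ) δ * γ
            = ((starRingEnd ℂ) z * z) * (((rp * rm : ℝ)) : ℂ)
              + (((t * rp) * (u * rm) : ℝ) : ℂ) := by
          simp only [hcα, hcβ, hcγ, hcδ, hα_def, hβ_def, hγ_def, hδ_def, map_mul, Complex.conj_ofReal]; push_cast; ring
        rw [e, hzz, ← Complex.ofReal_mul, ← Complex.ofReal_add]
        norm_cast
        linear_combination (rp * rm) * RZ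
      have s4 : (starRingEnd ℂ) β * β + (starRingEnd ℂ) δ * δ = 1 := by
        have e : (starRingEnd ℂ) β * β + (starRingEnd ℂ) δ * δ
            = ((starRingEnd ℂ) z * z) * (((rm * rm : ℝ)) : ℂ)
              + (((u * rm) * (u * rm) : ℝ) : ℂ) := by
          simp only [hcα, hcβ, hcγ, hcδ, hα_def, hβ_def, hγ_def, hδ_def, map_mul, Complex.conj_ofReal]; push_cast; ring
        rw [e, hzz, ← Complex.ofReal_mul, ← Complex.ofReal_add]
        norm_cast
      have s5 : α * ((lp : ℝ) : ℂ) * (starRingEnd ℂ) α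
          + β * ((lm : ℝ) : ℂ) * (starRingEnd ℂ) β = ((a : ℝ) : ℂ) := by
        have e : α * ((lp : ℝ) : ℂ) * (starRingEnd ℂ) α
            + β * ((lm : ℝ) : ℂ) * (starRingEnd ℂ) β
            = ((starRingEnd ℂ) z * z) * (((lp * (rp * rp) : ℝ)) : ℂ)
              + ((starRingEnd ℂ) z * z) * (((lm * (rm * rm) : ℝ)) : ℂ) := by
          simp only [hcα, hcβ, hcγ, hcδ, hα_def, hβ_def, hγ_def, hδ_def, map_mul, Complex.conj_ofReal]; push_cast; ring
        rw [e, hzz, ← Complex.ofReal_mul, ← Complex.ofReal_mul, ← Complex.ofReal_add]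
        norm_cast
        linear_combination RA
      have s6 : α * ((lp : ℝ) : ℂ) * (starRingEnd ℂ) γ
          + β * ((lm : ℝ) : ℂ) * (starRingEnd ℂ) δ = z := by
        have e : α * ((lp : ℝ) : ℂ) * (starRingEnd ℂ) γ
            + β * ((lm : ℝ) : ℂ) * (starRingEnd ℂ) δ
            = z * (((lp * (t * (rp * rp)) + lm * (u * (rm * rm)) : ℝ)) : ℂ) := by
          simp only [hcα, hcβ, hcγ, hcδ, hα_def, hβ_def, hγ_def, hδ_def, map_mul, Complex.conj_ofReal]; push_cast; ring
        rw [e, RB]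
        simp
      have s7 : γ * ((lp : ℝ) : ℂ) * (starRingEnd ℂ) α
          + δ * ((lm : ℝ) : ℂ) * (starRingEnd ℂ) β = (starRingEnd ℂ) z := by
        have e : γ * ((lp : ℝ) : ℂ) * (starRingEnd ℂ) α
            + δ * ((lm : ℝ) : ℂ) * (starRingEnd ℂ) β
            = (starRingEnd ℂ) z
                * (((lp * (t * (rp * rp)) + lm * (u * (rm * rm)) : ℝ)) : ℂ) := by
          simp only [hcα, hcβ, hcγ, hcδ, hα_def, hβ_def, hγ_def, hδ_def, map_mul, Complex.conj_ofReal]; push_cast; ring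
        rw [e, RB]
        simp
      have s8 : γ * ((lp : ℝ) : ℂ) * (starRingEnd ℂ) γ
          + δ * ((lm : ℝ) : ℂ) * (starRingEnd ℂ) δ = ((ε : ℝ) : ℂ) := by
        have e : γ * ((lp : ℝ) : ℂ) * (starRingEnd ℂ) γ
            + δ * ((lm : ℝ) : ℂ) * (starRingEnd ℂ) δ
            = (((lp * (t ^ 2 * (rp * rp)) + lm * (u ^ 2 * (rm * rm)) : ℝ)) : ℂ) := by
          simp only [hcα, hcβ, hcγ, hcδ, hα_def, hβ_def, hγ_def, hδ_def, map_mul, Complex.conj_ofReal]; push_cast; ring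
        rw [e, RC]
      -- the matrices
      set f : Fin dP → ℂ := fun i => if i = i0 then α else 1 with hf
      set g : Fin dQ → ℂ := fun j => if j = j0 then δ else 1 with hg
      set pf : Fin dP → ℝ := fun i => if i = i0 then lp else a₀ with hpf
      set qf : Fin dQ → ℝ := fun j => if j = j0 then lm else 0 with hqf
      have hsf : star f = fun i => if i = i0 then (starRingEnd ℂ) α else 1 := by
        funext i
        rw [Pi.star_apply, hf]
        dsimp only
        split_ifs <;> simp [Complex.star_def]
      have hsg : star g = fun j => if j = j0 then (starRingEnd ℂ) δ else 1 := by
        funext j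
        rw [Pi.star_apply, hg]
        dsimp only
        split_ifs <;> simp [Complex.star_def]
      refine ⟨fromBlocks (Matrix.diagonal f) (msingle i0 j0 β)
        (msingle j0 i0 γ) (Matrix.diagonal g), Sum.elim pf qf, ?_, ?_, ?_, ?_, ?_⟩
      · -- unitarity
        rw [fromBlocks_conjTranspose, Matrix.diagonal_conjTranspose,
          Matrix.diagonal_conjTranspose, msingle_conjTranspose, msingle_conjTranspose,
          fromBlocks_multiply, diagonal_mul_diagonal, diagonal_mul_diagonal,
          msingle_mul_msingle, msingle_mul_msingle,
          diagonal_mul_msingle, diagonal_mul_msingle,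
          msingle_mul_diagonal, msingle_mul_diagonal,
          msingle_add, msingle_add, ← Matrix.fromBlocks_one, Matrix.fromBlocks_inj]
        refine ⟨?_, ?_, ?_, ?_⟩
        · rw [diagonal_add_msingle, ← Matrix.diagonal_one, Matrix.diagonal_eq_diagonal_iff]
          intro i
          by_cases hi : i = i0
          · simp only [Pi.star_apply, Complex.star_def, star_one, map_one, hi, Pi.mul_apply, hsf, hf, eq_self_iff_true, if_true]
            linear_combination s1
          · simp only [Pi.star_apply, Complex.star_def, star_one, map_one, Pi.mul_apply, hsf, hf, if_neg hi]
            ring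
        · rw [← msingle_zero i0 j0]
          refine congrArg (msingle i0 j0) ?_
          simp only [Pi.mul_apply, hsf, hg, eq_self_iff_true, if_true]
          linear_combination s2
        · rw [← msingle_zero j0 i0]
          refine congrArg (msingle j0 i0) ?_
          simp only [Pi.mul_apply, hsg, hf, eq_self_iff_true, if_true]
          linear_combination s3
        · rw [add_comm, diagonal_add_msingle, ← Matrix.diagonal_one,
            Matrix.diagonal_eq_diagonal_iff]
          intro j
          by_cases hj : j = j0
          · simp only [Pi.star_apply, Complex.star_def, star_one, map_one, hj, Pi.mul_apply, hsg, hg, eq_self_iff_true, if_true]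
            linear_combination s4
          · simp only [Pi.star_apply, Complex.star_def, star_one, map_one, Pi.mul_apply, hsg, hg, if_neg hj]
            ring
      · -- decomposition of ρ
        have hD : Matrix.diagonal (fun x => ((Sum.elim pf qf x : ℝ) : ℂ))
            = fromBlocks (Matrix.diagonal fun i => ((pf i : ℝ) : ℂ)) 0 0
                (Matrix.diagonal fun j => ((qf j : ℝ) : ℂ)) := by
          rw [show (Matrix.diagonal fun x => ((Sum.elim pf qf x : ℝ) : ℂ))
              = Matrix.diagonal (Sum.elim (fun i => ((pf i : ℝ) : ℂ))
                  (fun j => ((qf j : ℝ) : ℂ)))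
            from by congr 1; funext x; cases x <;> rfl]
          rw [Matrix.fromBlocks_diagonal]
        have hVD : fromBlocks (Matrix.diagonal f) (msingle i0 j0 β)
              (msingle j0 i0 γ) (Matrix.diagonal g) *
            fromBlocks (Matrix.diagonal fun i => ((pf i : ℝ) : ℂ)) 0 0
              (Matrix.diagonal fun j => ((qf j : ℝ) : ℂ))
            = fromBlocks (Matrix.diagonal (fun i => f i * ((pf i : ℝ) : ℂ)))
                (msingle i0 j0 (β * ((qf j0 : ℝ) : ℂ)))
                (msingle j0 i0 (γ * ((pf i0 : ℝ) : ℂ)))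
                (Matrix.diagonal (fun j => g j * ((qf j : ℝ) : ℂ))) := by
          rw [fromBlocks_multiply, Matrix.mul_zero, Matrix.mul_zero, Matrix.mul_zero,
            Matrix.mul_zero, add_zero, add_zero, zero_add, zero_add,
            diagonal_mul_diagonal, diagonal_mul_diagonal,
            msingle_mul_diagonal, msingle_mul_diagonal]
        have hBH : (msingle i0 j0 z)ᴴ = msingle j0 i0 ((starRingEnd ℂ) z) :=
          msingle_conjTranspose _ _ _
        rw [hρ, hA', hB', hC', hBH, hD, hVD, fromBlocks_conjTranspose,
          Matrix.diagonal_conjTranspose, Matrix.diagonal_conjTranspose,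
          msingle_conjTranspose, msingle_conjTranspose,
          fromBlocks_multiply,
          diagonal_mul_diagonal, diagonal_mul_diagonal,
          msingle_mul_msingle, msingle_mul_msingle,
          diagonal_mul_msingle, diagonal_mul_msingle,
          msingle_mul_diagonal, msingle_mul_diagonal,
          msingle_add, msingle_add,
          Matrix.fromBlocks_inj]
        refine ⟨?_, ?_, ?_, ?_⟩
        · rw [diagonal_add_msingle, Matrix.diagonal_eq_diagonal_iff]
          intro i
          by_cases hi : i = i0
          · simp only [Pi.star_apply, Complex.star_def, star_one, map_one, hi, Pi.mul_apply, hsf, hf, hpf, hqf, hAf, eq_self_iff_true, if_true]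
            linear_combination -s5
          · simp only [Pi.star_apply, Complex.star_def, star_one, map_one, Pi.mul_apply, hsf, hf, hpf, hAf, if_neg hi]
            ring
        · refine congrArg (msingle i0 j0) ?_
          simp only [Pi.star_apply, Complex.star_def, star_one, map_one, Pi.mul_apply, hsf, hsg, hf, hg, hpf, hqf, eq_self_iff_true, if_true]
          linear_combination -s6
        · refine congrArg (msingle j0 i0) ?_
          simp only [Pi.star_apply, Complex.star_def, star_one, map_one, Pi.mul_apply, hsf, hsg, hf, hg, hpf, hqf, eq_self_iff_true, if_true]
          linear_combination -s7
        · rw [add_comm, diagonal_add_msingle, Matrix.diagonal_eq_diagonal_iff]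
          intro j
          by_cases hj : j = j0
          · simp only [Pi.star_apply, Complex.star_def, star_one, map_one, hj, Pi.mul_apply, hsg, hg, hqf, hpf, hCf, eq_self_iff_true, if_true]
            linear_combination -s8
          · simp only [Pi.star_apply, Complex.star_def, star_one, map_one, Pi.mul_apply, hsg, hg, hqf, hCf, if_neg hj]
            ring
      · intro x
        cases x with
        | inl i =>
          simp only [Sum.elim_inl, hpf]; split_ifs
          · exact hlp0
          · exact ha₀.le
        | inr j =>
          simp only [Sum.elim_inr, hqf]; split_ifs
          · exact hlm0
          · exact le_refl 0
      · rw [Fintype.sum_sum_type]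
        simp only [Sum.elim_inl, Sum.elim_inr]
        have e1 : ∑ i, pf i = lp + ((Fintype.card (Fin dP) - 1 : ℕ) : ℝ) * a₀ := by
          rw [hpf]; exact sum_apply_ite_card i0 (fun w => w) lp a₀
        have e2 : ∑ j, qf j = lm + ((Fintype.card (Fin dQ) - 1 : ℕ) : ℝ) * 0 := by
          rw [hqf]; exact sum_apply_ite_card j0 (fun w => w) lm 0
        rw [e1, e2, hcardP]
        have : a = 1 - ε - ((dP : ℝ) - 1) * a₀ := ha_def
        linarith [hlplm]
      · rw [Fintype.sum_sum_type]
        simp only [Sum.elim_inl, Sum.elim_inr]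
        have e1 : ∑ i, pf i * Real.log (pf i)
            = lp * Real.log lp
              + ((Fintype.card (Fin dP) - 1 : ℕ) : ℝ) * (a₀ * Real.log a₀) := by
          rw [hpf]; exact sum_apply_ite_card i0 (fun w => w * Real.log w) lp a₀
        have e2 : ∑ j, qf j * Real.log (qf j)
            = lm * Real.log lm
              + ((Fintype.card (Fin dQ) - 1 : ℕ) : ℝ) * (0 * Real.log 0) := by
          rw [hqf]; exact sum_apply_ite_card j0 (fun w => w * Real.log w) lm 0
        rw [e1, e2, hcardP]
        ring
  refine ⟨psd_of_conj V ρ dv hdec hdv0, ?_, ?_, ?_, ?_, ?_⟩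
  · rw [hdec, trace_conj_eq _ _ hVu, trace_diagonal,
      show (∑ x, ((dv x : ℝ) : ℂ)) = ((∑ x, dv x : ℝ) : ℂ) from by push_cast; rfl,
      hdvsum, Complex.ofReal_one]
  · have hA1 : A - a₀ • (1 : Matrix (Fin dP) (Fin dP) ℂ)
        = Matrix.diagonal (fun i => ((Af i - a₀ : ℝ) : ℂ)) := by
      rw [hA']
      ext i j
      by_cases hij : i = j
      · subst hij
        simp [Matrix.sub_apply, Matrix.diagonal_apply_eq, Matrix.smul_apply,
          Matrix.one_apply_eq, Complex.real_smul]
      · simp [Matrix.sub_apply, Matrix.diagonal_apply_ne _ hij, Matrix.one_apply_ne hij]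
    rw [hA1]
    refine posSemidef_diagonal_iff.mpr fun i => ?_
    have h0 : (0 : ℝ) ≤ Af i - a₀ := by
      rw [hAf]; dsimp only; split_ifs <;> linarith
    exact_mod_cast h0
  · rw [hC', trace_diagonal]
    have he : ∀ j : Fin dQ, ((Cf j : ℝ) : ℂ) = if j = j0 then ((ε : ℝ) : ℂ) else 0 := by
      intro j; rw [hCf]; dsimp only; split_ifs <;> simp
    simp_rw [he]
    rw [Finset.sum_ite_eq' Finset.univ j0 fun _ => ((ε : ℝ) : ℂ)]
    simp
  · rw [hB', msingle_conjTranspose, msingle_mul_msingle, trace_msingle, hzz]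
  · have hT1 : (ρ * mlog ρ).trace = ((∑ x, dv x * Real.log (dv x) : ℝ) : ℂ) :=
      trace_mul_mlog V ρ dv hVu hdec
    have htr : (ρ * Matrix.diagonal fun x => ((Real.log (Sum.elim Af Cf x) : ℝ) : ℂ)).trace
        = ∑ x, ρ x x * ((Real.log (Sum.elim Af Cf x) : ℝ) : ℂ) := by
      rw [Matrix.trace]
      refine Finset.sum_congr rfl fun x _ => ?_
      rw [Matrix.diag_apply, Matrix.mul_diagonal]
    have hρd1 : ∀ i, ρ (Sum.inl i) (Sum.inl i) = ((Af i : ℝ) : ℂ) := by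
      intro i; rw [hρ, hA']
      show Matrix.diagonal (fun i => ((Af i : ℝ) : ℂ)) i i = _
      rw [Matrix.diagonal_apply_eq]
    have hρd2 : ∀ j, ρ (Sum.inr j) (Sum.inr j) = ((Cf j : ℝ) : ℂ) := by
      intro j; rw [hρ, hC']
      show Matrix.diagonal (fun j => ((Cf j : ℝ) : ℂ)) j j = _
      rw [Matrix.diagonal_apply_eq]
    have hT2 : (ρ * mlog (fromBlocks A 0 0 C)).trace
        = ((a * Real.log a + ((dP : ℝ) - 1) * (a₀ * Real.log a₀)
            + ε * Real.log ε : ℝ) : ℂ) := by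
      rw [hmlogPi, htr, Fintype.sum_sum_type]
      simp only [Sum.elim_inl, Sum.elim_inr]
      simp_rw [hρd1, hρd2]
      have e1 : ∑ i, ((Af i : ℝ) : ℂ) * ((Real.log (Af i) : ℝ) : ℂ)
          = ((∑ i, Af i * Real.log (Af i) : ℝ) : ℂ) := by push_cast; rfl
      have e2 : ∑ j, ((Cf j : ℝ) : ℂ) * ((Real.log (Cf j) : ℝ) : ℂ)
          = ((∑ j, Cf j * Real.log (Cf j) : ℝ) : ℂ) := by push_cast; rfl
      rw [e1, e2]
      have e3 : ∑ i, Af i * Real.log (Af i)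
          = a * Real.log a + ((Fintype.card (Fin dP) - 1 : ℕ) : ℝ) * (a₀ * Real.log a₀) := by
        rw [hAf]; exact sum_apply_ite_card i0 (fun w => w * Real.log w) a a₀
      have e4 : ∑ j, Cf j * Real.log (Cf j)
          = ε * Real.log ε + ((Fintype.card (Fin dQ) - 1 : ℕ) : ℝ) * (0 * Real.log 0) := by
        rw [hCf]; exact sum_apply_ite_card j0 (fun w => w * Real.log w) ε 0
      rw [e3, e4, hcardP]
      push_cast
      ring
    show ((ρ * (mlog ρ - mlog (fromBlocks A 0 0 C))).trace).re = _
    rw [mul_sub, trace_sub, hT1, hT2, ← Complex.ofReal_sub, Complex.ofReal_re, hdvlog]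
    simp only [Phi]
    rw [← hs_def, ← hlp_def, ← hlm_def]
    ring
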